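/- Let (e_i)_{i∈I} be a summable family of idempotents in a ring R with a linear, Hausdorff topology, where I is well-ordered. Put e = ∑_{i∈I} e_i and suppose e_i e_j = 0 whenever i < j. If eⁿr = 0 for some r ∈ R and some integer n ≥ 1, then e_i r = 0 for all i ∈ I; in particular, er = 0. -/

import Mathlib

/-- A ring topology is *linear* if `0` has a neighborhood basis consisting of left ideals. -/
def HasLinearTopology (R : Type*) [Ring R] [TopologicalSpace R] : Prop :=
  ∀ U ∈ nhds (0 : R), ∃ I : Ideal R, (I : Set R) ∈ nhds (0 : R) ∧ (I : Set R) ⊆ U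

/-- Lemma 5. Let `(f i)` be a summable family of idempotents, indexed by
a well-ordered set, in a ring with a linear Hausdorff topology, with `e = ∑ᵢ f i` and
`f i * f j = 0` for `i < j`.  If `eⁿ * r = 0` for some `n ≥ 1`, then `f i * r = 0` for all
`i`; in particular `e * r = 0`. -/
theorem triangular_idempotents_power_annihilates
    (R : Type*) [Ring R] [TopologicalSpace R] [IsTopologicalRing R] [T2Space R]
    (hlin : HasLinearTopology R)
    {ι : Type*} [LinearOrder ι] [WellFoundedLT ι]
    (f : ι → R) (hidem : ∀ i, IsIdempotentElem (f i))
    (horth : ∀ i j : ι, i < j → f i * f j = 0)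
    (e : R) (hsum : HasSum f e)
    (r : R) (n : ℕ) (hn : 1 ≤ n) (h : e ^ n * r = 0) :
    (∀ i, f i * r = 0) ∧ e * r = 0 := by
  have key : ∀ i : ι, ∀ k : ℕ, k ≤ n → f i * e ^ k * r = 0 := by
    intro i
    induction i using WellFoundedLT.induction with
    | _ i IH =>
      have step : ∀ d : ℕ, ∀ k : ℕ, k + d = n → f i * e ^ k * r = 0 := by
        intro d
        induction d with
        | zero =>
          intro k hk
          simp only [Nat.add_zero] at hk
          subst hk
          rw [mul_assoc, h, mul_zero]
        | succ d IHd =>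
          intro k hk
          have hk1 : (k + 1) + d = n := by omega
          have A : f i * e ^ (k + 1) * r = 0 := IHd (k + 1) hk1
          have h1 : HasSum (fun j => f i * f j * (e ^ k * r)) (f i * e * (e ^ k * r)) :=
            (hsum.mul_left (f i)).mul_right (e ^ k * r)
          have h2 : (fun j => f i * f j * (e ^ k * r)) =
              fun j => if j = i then f i * e ^ k * r else 0 := by
            funext j
            rcases lt_trichotomy j i with hji | hji | hji
            · have hj : f j * (e ^ k * r) = 0 := by
                rw [← mul_assoc]; exact IH j hji k (by omega)
              rw [if_neg hji.ne, mul_assoc, hj, mul_zero]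
            · subst hji
              rw [if_pos rfl, hidem j, mul_assoc]
            · rw [if_neg hji.ne', horth i j hji, zero_mul]
          rw [h2] at h1
          have h4 : HasSum (fun j => if j = i then f i * e ^ k * r else 0)
              (f i * e ^ k * r) := hasSum_ite_eq i _
          have := h4.unique h1
          rw [this]
          rw [show f i * e * (e ^ k * r) = f i * e ^ (k + 1) * r by
            rw [pow_succ', mul_assoc, mul_assoc, mul_assoc]]
          exact A
      intro k hk
      exact step (n - k) k (by omega)
  have hfi : ∀ i, f i * r = 0 := by
    intro i
    have := key i 0 (Nat.zero_le n)
    simpa using this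
  refine ⟨hfi, ?_⟩
  have h5 : HasSum (fun i => f i * r) (e * r) := hsum.mul_right r
  have h6 : (fun i => f i * r) = fun _ : ι => (0 : R) := funext hfi
  rw [h6] at h5
  exact h5.unique hasSum_zero
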